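/- Every unital left algebraically amenable K-algebra A has the Invariant Basis Number property: if Aⁿ ≅ Aᵐ as left A-modules then n = m. -/

import Mathlib

/-- `W` is a left `(F, ε)`-Følner subspace: a nonzero finite-dimensional subspace with
`dim(aW + W) ≤ (1+ε)·dim W` for all `a ∈ F`. -/
def IsFolnerSubspace (K : Type*) {A : Type*} [Field K] [NonUnitalRing A] [Module K A]
    [SMulCommClass K A A] [IsScalarTower K A A]
    (F : Finset A) (ε : ℝ) (W : Submodule K A) : Prop :=
  W ≠ ⊥ ∧ FiniteDimensional K W ∧
    ∀ a ∈ F, (Module.finrank K ↥(W.map (LinearMap.mulLeft K a) ⊔ W) : ℝ) ≤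
      (1 + ε) * (Module.finrank K ↥W : ℝ)

/-- Left algebraic amenability. -/
def AlgAmenable (K A : Type*) [Field K] [NonUnitalRing A] [Module K A]
    [SMulCommClass K A A] [IsScalarTower K A A] : Prop :=
  ∀ ε > (0:ℝ), ∀ F : Finset A, ∃ W : Submodule K A, IsFolnerSubspace K F ε W

/-- Proper left algebraic amenability. -/
def ProperlyAlgAmenable (K A : Type*) [Field K] [NonUnitalRing A] [Module K A]
    [SMulCommClass K A A] [IsScalarTower K A A] : Prop :=
  ∀ ε > (0:ℝ), ∀ F : Finset A, ∃ W : Submodule K A,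
    IsFolnerSubspace K F ε W ∧ ∀ a ∈ F, a ∈ W

open Module LinearMap Submodule Finset in
/-- Dimension bound for the union of translates. -/
lemma folner_dim_bound {K A : Type*} [Field K] [Ring A] [Algebra K A]
    (W : Submodule K A) [FiniteDimensional K W] (F : Finset A) :
    (finrank K ↥(W ⊔ F.sup fun a => W.map (LinearMap.mulLeft K a)) : ℝ) ≤
      (finrank K W : ℝ) + ∑ a ∈ F,
        ((finrank K ↥(W.map (LinearMap.mulLeft K a) ⊔ W) : ℝ) - finrank K W) := by
  classical
  induction F using Finset.induction_on with
  | empty =>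
      rw [Finset.sup_empty, sup_bot_eq]
      simp
  | insert a s ha ih =>
      set f : A → Submodule K A := fun a => W.map (LinearMap.mulLeft K a) with hf
      have hsup : W ⊔ (insert a s).sup f = (f a ⊔ W) ⊔ (W ⊔ s.sup f) := by
        rw [Finset.sup_insert, sup_sup_distrib_left, sup_comm W (f a)]
      rw [hsup, Finset.sum_insert ha]
      set X := f a ⊔ W with hX
      set T := W ⊔ s.sup f with hT
      have hkey := Submodule.finrank_sup_add_finrank_inf_eq X T
      have hWle : W ≤ X ⊓ T := le_inf le_sup_right le_sup_left
      have h1 : finrank K W ≤ finrank K ↥(X ⊓ T) := Submodule.finrank_mono hWle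
      have h2 : (finrank K ↥(X ⊔ T) : ℝ) + finrank K ↥(X ⊓ T)
          = finrank K ↥X + finrank K ↥T := by exact_mod_cast hkey
      have h1' : (finrank K W : ℝ) ≤ finrank K ↥(X ⊓ T) := by exact_mod_cast h1
      linarith [ih]

set_option maxHeartbeats 1000000 in
open Module LinearMap Submodule Finset in
lemma no_iso_of_algAmenable {K A : Type*} [Field K] [Ring A] [Algebra K A]
    (ham : AlgAmenable K A) (n m : ℕ) (hnm : n < m)
    (e : (Fin n → A) ≃ₗ[A] (Fin m → A)) : False := by
  classical
  set M : Fin n → Fin m → A := fun i j => e (Pi.single i 1) j with hM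
  set N : Fin m → Fin n → A := fun k i => e.symm (Pi.single k 1) i with hN
  -- expansion of e and e.symm in coordinates
  have single_smul : ∀ {ι : Type} [Fintype ι] [DecidableEq ι] (i : ι) (c : A),
      Pi.single i c = c • (Pi.single i 1 : ι → A) := by
    intro ι _ _ i c
    funext j
    by_cases h : j = i <;> simp [Pi.single_apply, h]
  have hexp : ∀ (x : Fin n → A) (j : Fin m), e x j = ∑ i, x i * M i j := by
    intro x j
    conv_lhs => rw [← Finset.univ_sum_single x]
    rw [map_sum, Finset.sum_apply]
    refine Finset.sum_congr rfl fun i _ => ?_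
    rw [single_smul i (x i), map_smul]
    rfl
  have hexp' : ∀ (y : Fin m → A) (i : Fin n), e.symm y i = ∑ k, y k * N k i := by
    intro y i
    conv_lhs => rw [← Finset.univ_sum_single y]
    rw [map_sum, Finset.sum_apply]
    refine Finset.sum_congr rfl fun k _ => ?_
    rw [single_smul k (y k), map_smul]
    rfl
  -- the matrix identity N * M = 1
  have hmat : ∀ (k j : Fin m), (∑ i, N k i * M i j) = if j = k then 1 else 0 := by
    intro k j
    have h1 : e (e.symm (Pi.single k 1)) j = (Pi.single k 1 : Fin m → A) j := by
      rw [e.apply_symm_apply]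
    rw [hexp] at h1
    simpa [Pi.single_apply] using h1
  have hcancel : ∀ (w : Fin m → A) (k : Fin m),
      ∑ i, N k i * (∑ j, M i j * w j) = w k := by
    intro w k
    calc ∑ i, N k i * ∑ j, M i j * w j
        = ∑ i, ∑ j, N k i * M i j * w j := by
          simp [Finset.mul_sum, mul_assoc]
      _ = ∑ j, (∑ i, N k i * M i j) * w j := by
          rw [Finset.sum_comm]
          simp [Finset.sum_mul]
      _ = w k := by
          simp [hmat, ite_mul]
  -- set up the Følner subspace
  set F : Finset A := Finset.image (fun p : Fin n × Fin m => M p.1 p.2) Finset.univ with hF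
  set c : ℕ := F.card with hc
  set ε : ℝ := ((m : ℝ) - n) / ((c + 1) * (n + 1)) with hε
  have hmn : (n : ℝ) < m := by exact_mod_cast hnm
  have hεpos : 0 < ε := by
    apply div_pos (by linarith) (mul_pos (by linarith [Nat.cast_nonneg (α := ℝ) c]) (by linarith [Nat.cast_nonneg (α := ℝ) n]))
  obtain ⟨W, hWbot, hWfd, hWF⟩ := ham ε hεpos F
  haveI := hWfd
  set V : Submodule K A := W ⊔ F.sup fun a => W.map (LinearMap.mulLeft K a) with hV
  haveI : FiniteDimensional K V := by
    rw [hV]; infer_instance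
  -- the comparison map
  have memV : ∀ (i : Fin n) (w : Fin m → W), (∑ j, M i j * (w j : A)) ∈ V := by
    intro i w
    refine Submodule.sum_mem _ fun j _ => ?_
    have h1 : M i j * (w j : A) ∈ W.map (LinearMap.mulLeft K (M i j)) :=
      ⟨w j, (w j).2, rfl⟩
    have h2 : W.map (LinearMap.mulLeft K (M i j)) ≤ V := by
      refine le_trans ?_ le_sup_right
      have hmem : M i j ∈ F := by
        rw [hF]
        exact Finset.mem_image.mpr ⟨(i, j), Finset.mem_univ _, rfl⟩
      exact Finset.le_sup (f := fun a => W.map (LinearMap.mulLeft K a)) hmem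
    exact h2 h1
  let Φ : (Fin m → W) →ₗ[K] (Fin n → V) :=
    { toFun := fun w i => ⟨∑ j, M i j * (w j : A), memV i w⟩
      map_add' := by
        intro w w'
        funext i
        apply Subtype.ext
        simp [mul_add, Finset.sum_add_distrib]
      map_smul' := by
        intro cc w
        funext i
        apply Subtype.ext
        simp [Finset.smul_sum, mul_smul_comm] }
  have hΦinj : Function.Injective Φ := by
    intro w w' hww'
    funext k
    apply Subtype.ext
    have h1 : ∀ i, ∑ j, M i j * (w j : A) = ∑ j, M i j * (w' j : A) := fun i =>
      congrArg Subtype.val (congrFun hww' i)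
    calc (w k : A) = ∑ i, N k i * (∑ j, M i j * (w j : A)) :=
          (hcancel (fun j => (w j : A)) k).symm
      _ = ∑ i, N k i * (∑ j, M i j * (w' j : A)) := by
          refine Finset.sum_congr rfl fun i _ => ?_
          rw [h1 i]
      _ = (w' k : A) := hcancel (fun j => (w' j : A)) k
  have hdim : finrank K (Fin m → W) ≤ finrank K (Fin n → V) :=
    LinearMap.finrank_le_finrank_of_injective hΦinj
  have hm : finrank K (Fin m → W) = m * finrank K W := by
    rw [Module.finrank_pi_fintype]
    simp [Finset.sum_const, Finset.card_univ, mul_comm]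
  have hn : finrank K (Fin n → V) = n * finrank K V := by
    rw [Module.finrank_pi_fintype]
    simp [Finset.sum_const, Finset.card_univ, mul_comm]
  set d : ℝ := (finrank K W : ℝ) with hd
  have hd1 : (1 : ℝ) ≤ d := by
    have : Nontrivial W := Submodule.nontrivial_iff_ne_bot.mpr hWbot
    have h0 : 0 < finrank K W := Module.finrank_pos_iff.mpr this
    have h1 : 1 ≤ finrank K W := h0
    rw [hd]
    exact_mod_cast h1
  have hbound := folner_dim_bound W F
  have hsum : ∑ a ∈ F, ((finrank K ↥(W.map (LinearMap.mulLeft K a) ⊔ W) : ℝ)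
      - finrank K W) ≤ c * (ε * d) := by
    calc ∑ a ∈ F, ((finrank K ↥(W.map (LinearMap.mulLeft K a) ⊔ W) : ℝ) - finrank K W)
        ≤ ∑ _a ∈ F, ε * d := by
          refine Finset.sum_le_sum fun a haF => ?_
          have := hWF a haF
          rw [← hd]
          linarith
      _ = c * (ε * d) := by
          rw [Finset.sum_const, nsmul_eq_mul, hc]
  have hVd : (finrank K V : ℝ) ≤ d + c * (ε * d) := le_trans hbound (by linarith)
  have hmain : (m : ℝ) * d ≤ n * (d + c * (ε * d)) := by
    rw [hm, hn] at hdim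
    have h1 : (m : ℝ) * d ≤ (n : ℝ) * (finrank K V : ℝ) := by
      rw [hd]
      exact_mod_cast hdim
    have h2 : (n : ℝ) * (finrank K V : ℝ) ≤ n * (d + c * (ε * d)) :=
      mul_le_mul_of_nonneg_left hVd (by positivity)
    exact le_trans h1 h2
  -- final contradiction
  have hck : (n : ℝ) * c * ε < (m : ℝ) - n := by
    have h1 : (0:ℝ) < (c + 1) * (n + 1) := mul_pos (by linarith [Nat.cast_nonneg (α := ℝ) c]) (by linarith [Nat.cast_nonneg (α := ℝ) n])
    have h2 : (n : ℝ) * c < (c + 1) * (n + 1) := by nlinarith [Nat.cast_nonneg (α := ℝ) n, Nat.cast_nonneg (α := ℝ) c]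
    have h3 : (n : ℝ) * c * ε = ((m : ℝ) - n) * ((n : ℝ) * c / ((c + 1) * (n + 1))) := by
      rw [hε]; field_simp
    rw [h3]
    have h4 : (n : ℝ) * c / ((c + 1) * (n + 1)) < 1 := (div_lt_one h1).mpr h2
    nlinarith
  nlinarith [mul_le_mul_of_nonneg_left hd1 (le_of_lt (lt_of_le_of_lt (mul_nonneg (mul_nonneg (Nat.cast_nonneg _) (Nat.cast_nonneg _)) hεpos.le : (0:ℝ) ≤ (n:ℝ) * c * ε) hck))]

theorem stmt17 {K A : Type*} [Field K] [Ring A] [Algebra K A]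
    (ham : AlgAmenable K A) (n m : ℕ)
    (e : Nonempty ((Fin n → A) ≃ₗ[A] (Fin m → A))) : n = m := by
  obtain ⟨e⟩ := e
  rcases lt_trichotomy n m with h | h | h
  · exact absurd (no_iso_of_algAmenable ham n m h e) id
  · exact h
  · exact absurd (no_iso_of_algAmenable ham m n h e.symm) id
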